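/- (Negative relative entropy of Gaussian conditionals as a Gaussian likelihood.) For every x ∈ ℝ^d, ∫_{ℝ^n} log( κ₂(x' | x)/κ₁(x' | x) )·κ₁(x' | x) dx' = log c + log N(y ; H·x, Σ₂), where y := b₂ − b₁ ∈ ℝ^n, H := A₁ − A₂, N(· ; H·x, Σ₂) is the Gaussian density with mean H·x and covariance Σ₂ evaluated at y, and log c = −(1/2)·[ trace(Σ₂⁻¹ Σ₁) − n·(1 + log 2π) − log det Σ₁ ]. The integral is with respect to Lebesgue measure on ℝ^n. -/

import Mathlib

open MeasureTheory Matrix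
open scoped BigOperators

/-- The Gaussian density on `ℝ^n` with mean `m` and (positive definite) covariance `S`:
`N(x'; m, S) = det(2π·S)^{-1/2} · exp(−(1/2)·(x'−m)ᵀ S⁻¹ (x'−m))`. -/
noncomputable def gaussianDensity {n : ℕ} (m : Fin n → ℝ)
    (S : Matrix (Fin n) (Fin n) ℝ) (x : Fin n → ℝ) : ℝ :=
  ((2 * Real.pi) • S).det ^ (-(1 : ℝ) / 2) *
    Real.exp (-(1 / 2) * ((x - m) ⬝ᵥ S⁻¹.mulVec (x - m)))

open Real Filter
section Aux

lemma int1d_exp : Integrable (fun t : ℝ => Real.exp (-(1/2) * t^2)) := by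
  simpa using integrable_exp_neg_mul_sq (by norm_num : (0:ℝ) < 1/2)

lemma int1d_texp : Integrable (fun t : ℝ => t * Real.exp (-(1/2) * t^2)) := by
  simpa using integrable_mul_exp_neg_mul_sq (by norm_num : (0:ℝ) < 1/2)

lemma int1d_t2exp : Integrable (fun t : ℝ => t * (t * Real.exp (-(1/2) * t^2))) := by
  have h := integrable_rpow_mul_exp_neg_mul_sq (by norm_num : (0:ℝ) < 1/2)
    (by norm_num : (-1:ℝ) < 2)
  have h2 : (fun t : ℝ => t ^ (2:ℝ) * Real.exp (-(1/2) * t^2))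
      = fun t : ℝ => t * (t * Real.exp (-(1/2) * t^2)) := by
    funext t
    rw [show (2:ℝ) = ((2:ℕ):ℝ) by norm_num, Real.rpow_natCast]
    ring
  rwa [h2] at h

lemma hasDerivAt_negexp (t : ℝ) :
    HasDerivAt (fun s : ℝ => -Real.exp (-(1/2) * s^2)) (t * Real.exp (-(1/2) * t^2)) t := by
  have h1 : HasDerivAt (fun s : ℝ => -(1/2) * s^2) (-(1/2) * (2 * t)) t := by
    simpa using ((hasDerivAt_pow 2 t).const_mul (-(1/2) : ℝ))
  have h2 : HasDerivAt (fun s : ℝ => -Real.exp (-(1/2) * s^2)) _ t := (h1.exp).neg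
  convert h2 using 1
  ring

lemma I1d_exp : ∫ t : ℝ, Real.exp (-(1/2) * t^2) = Real.sqrt (2 * Real.pi) := by
  have := integral_gaussian (1/2)
  rw [show Real.pi / (1/2) = 2 * Real.pi by ring] at this
  simpa using this

lemma tendsto_negexp_atTop : Tendsto (fun s : ℝ => -Real.exp (-(1/2) * s^2)) atTop (nhds 0) := by
  have h1 : Tendsto (fun s : ℝ => (1/2) * s^2) atTop atTop :=
    (tendsto_pow_atTop (two_ne_zero)).const_mul_atTop (by norm_num)
  have h2 : Tendsto (fun s : ℝ => -(1/2) * s^2) atTop atBot := by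
    have h := tendsto_neg_atTop_atBot.comp h1
    refine h.congr (fun s => ?_)
    simp [Function.comp_def]
    try ring_nf
  have h3 := (Real.tendsto_exp_atBot).comp h2
  have := h3.neg
  simpa [Function.comp] using this

lemma tendsto_negexp_atBot : Tendsto (fun s : ℝ => -Real.exp (-(1/2) * s^2)) atBot (nhds 0) := by
  have hsq : Tendsto (fun s : ℝ => s^2) atBot atTop := by
    have := (tendsto_pow_atTop (two_ne_zero : (2:ℕ) ≠ 0)).comp
      (tendsto_neg_atBot_atTop : Tendsto (fun s : ℝ => -s) atBot atTop)
    refine this.congr (fun s => ?_)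
    simp [Function.comp]
  have h1 : Tendsto (fun s : ℝ => (1/2) * s^2) atBot atTop :=
    hsq.const_mul_atTop (by norm_num)
  have h2 : Tendsto (fun s : ℝ => -(1/2) * s^2) atBot atBot := by
    have h := tendsto_neg_atTop_atBot.comp h1
    refine h.congr (fun s => ?_)
    simp [Function.comp_def]
    try ring_nf
  have h3 := (Real.tendsto_exp_atBot).comp h2
  have := h3.neg
  simpa [Function.comp] using this

lemma I1d_texp : ∫ t : ℝ, t * Real.exp (-(1/2) * t^2) = 0 := by
  have := integral_of_hasDerivAt_of_tendsto (m := 0) (n := 0)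
    (fun t => hasDerivAt_negexp t) int1d_texp tendsto_negexp_atBot tendsto_negexp_atTop
  simpa using this

lemma I1d_t2exp : ∫ t : ℝ, t * (t * Real.exp (-(1/2) * t^2)) = Real.sqrt (2 * Real.pi) := by
  have h := integral_mul_deriv_eq_deriv_mul_of_integrable
    (u := fun t : ℝ => t) (u' := fun _ => (1:ℝ))
    (v := fun t : ℝ => -Real.exp (-(1/2) * t^2))
    (v' := fun t : ℝ => t * Real.exp (-(1/2) * t^2))
    (fun t _ => hasDerivAt_id t) (fun t _ => hasDerivAt_negexp t)
    (by simpa [Pi.mul_def] using int1d_t2exp)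
    (by
      have : ((fun _ : ℝ => (1:ℝ)) * fun t : ℝ => -Real.exp (-(1/2) * t^2))
          = fun t : ℝ => -Real.exp (-(1/2) * t^2) := by
        funext t; simp [Pi.mul_apply]
      rw [this]; exact int1d_exp.neg)
    (by
      have : ((fun t : ℝ => t) * fun t : ℝ => -Real.exp (-(1/2) * t^2))
          = fun t : ℝ => -(t * Real.exp (-(1/2) * t^2)) := by
        funext t; simp [Pi.mul_apply]
      rw [this]; exact int1d_texp.neg)
  rw [h]
  have : (fun x : ℝ => (1:ℝ) * -Real.exp (-(1/2) * x^2))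
      = fun x : ℝ => -Real.exp (-(1/2) * x^2) := by funext t; ring
  rw [this, integral_neg, neg_neg, I1d_exp]

open Matrix

section PiGauss
variable {n : ℕ}

noncomputable def Gfun (u : Fin n → ℝ) : ℝ := ∏ i, Real.exp (-(1/2) * (u i)^2)

lemma Gfun_eq (u : Fin n → ℝ) : Gfun u = Real.exp (-(1/2) * (u ⬝ᵥ u)) := by
  rw [Gfun, ← Real.exp_sum]
  congr 1
  rw [dotProduct, Finset.mul_sum]
  exact Finset.sum_congr rfl fun i _ => by ring

lemma intG : Integrable (Gfun (n := n)) :=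
  Integrable.fintype_prod (f := fun _ : Fin n => fun t : ℝ => Real.exp (-(1/2) * t^2))
    (fun _ => int1d_exp)

lemma IG : ∫ u : Fin n → ℝ, Gfun u = Real.sqrt (2 * Real.pi) ^ n := by
  unfold Gfun
  rw [MeasureTheory.integral_fintype_prod_volume_eq_pow (ι := Fin n)
    (fun t : ℝ => Real.exp (-(1/2) * t^2)), I1d_exp, Fintype.card_fin]

noncomputable def hfun (j k : Fin n) (i : Fin n) (t : ℝ) : ℝ :=
  (if j = i then t else 1) * ((if k = i then t else 1) * Real.exp (-(1/2) * t^2))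

lemma hfun_int (j k i : Fin n) : Integrable (hfun j k i) := by
  unfold hfun
  rcases eq_or_ne j i with hj | hj <;> rcases eq_or_ne k i with hk | hk
  · subst hj; subst hk; simp only [if_pos rfl]; exact int1d_t2exp
  · subst hj; simp only [if_pos rfl, if_neg hk, one_mul]; exact int1d_texp
  · subst hk
    simp only [if_pos rfl, if_neg hj, one_mul]
    exact int1d_texp
  · simp only [if_neg hj, if_neg hk, one_mul]; exact int1d_exp

lemma prod_hfun (j k : Fin n) (u : Fin n → ℝ) :
    (∏ i, hfun j k i (u i)) = u j * (u k * Gfun u) := by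
  simp only [hfun, Finset.prod_mul_distrib]
  rw [Finset.prod_ite_eq, Finset.prod_ite_eq]
  simp [Gfun]

lemma int_jk (j k : Fin n) : Integrable (fun u : Fin n → ℝ => u j * (u k * Gfun u)) := by
  have := Integrable.fintype_prod (f := hfun j k) (fun i => hfun_int j k i)
  refine this.congr (Filter.Eventually.of_forall fun u => ?_)
  exact prod_hfun j k u

lemma I_jk (j k : Fin n) :
    ∫ u : Fin n → ℝ, u j * (u k * Gfun u)
      = if j = k then Real.sqrt (2 * Real.pi) ^ n else 0 := by
  have : ∫ u : Fin n → ℝ, u j * (u k * Gfun u) = ∏ i, ∫ t : ℝ, hfun j k i t := by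
    rw [← MeasureTheory.integral_fintype_prod_eq_prod (ι := Fin n) (hfun j k)]
    congr 1
    funext u
    exact (prod_hfun j k u).symm
  rw [this]
  rcases eq_or_ne j k with h | h
  · subst h
    rw [if_pos rfl]
    have hval : ∀ i, ∫ t : ℝ, hfun j j i t = Real.sqrt (2 * Real.pi) := by
      intro i
      rcases eq_or_ne j i with hj | hj
      · subst hj
        simp only [hfun, if_pos rfl]
        exact I1d_t2exp
      · simp only [hfun, if_neg hj, one_mul]
        exact I1d_exp
    rw [Finset.prod_congr rfl (fun i _ => hval i), Finset.prod_const, Finset.card_univ,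
      Fintype.card_fin]
  · rw [if_neg h]
    refine Finset.prod_eq_zero (Finset.mem_univ j) ?_
    simp only [hfun, if_pos rfl, if_neg (fun hc => h (hc.symm ▸ rfl) : ¬ k = j), one_mul]
    exact I1d_texp

lemma int_j (j : Fin n) : Integrable (fun u : Fin n → ℝ => u j * Gfun u) := by
  have := Integrable.fintype_prod
    (f := fun i => fun t : ℝ => (if j = i then t else 1) * Real.exp (-(1/2) * t^2))
    (fun i => by
      rcases eq_or_ne j i with hj | hj
      · simpa [hj] using int1d_texp
      · simpa [hj] using int1d_exp)
  refine this.congr (Filter.Eventually.of_forall fun u => ?_)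
  simp only [Finset.prod_mul_distrib, Finset.prod_ite_eq]
  simp [Gfun]

lemma I_j (j : Fin n) : ∫ u : Fin n → ℝ, u j * Gfun u = 0 := by
  have : ∫ u : Fin n → ℝ, u j * Gfun u
      = ∏ i, ∫ t : ℝ, (if j = i then t else 1) * Real.exp (-(1/2) * t^2) := by
    rw [← MeasureTheory.integral_fintype_prod_eq_prod (ι := Fin n)
      (fun i => fun t : ℝ => (if j = i then t else 1) * Real.exp (-(1/2) * t^2))]
    congr 1
    funext u
    simp only [Finset.prod_mul_distrib, Finset.prod_ite_eq]
    simp [Gfun]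
  rw [this]
  refine Finset.prod_eq_zero (Finset.mem_univ j) ?_
  simp only [if_pos rfl]
  exact I1d_texp

end PiGauss

section Master
variable {n : ℕ}

lemma quad_expand (M : Matrix (Fin n) (Fin n) ℝ) (u : Fin n → ℝ) :
    (u ⬝ᵥ M *ᵥ u) * Gfun u = ∑ j, ∑ k, M j k * (u j * (u k * Gfun u)) := by
  simp only [dotProduct, Matrix.mulVec, Finset.sum_mul]
  refine Finset.sum_congr rfl fun j _ => ?_
  rw [Finset.mul_sum, Finset.sum_mul]
  exact Finset.sum_congr rfl fun k _ => by ring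

lemma intQuad (M : Matrix (Fin n) (Fin n) ℝ) :
    Integrable (fun u : Fin n → ℝ => (u ⬝ᵥ M *ᵥ u) * Gfun u) := by
  have : Integrable (fun u : Fin n → ℝ => ∑ j, ∑ k, M j k * (u j * (u k * Gfun u))) :=
    integrable_finset_sum _ fun j _ => integrable_finset_sum _ fun k _ =>
      (int_jk j k).const_mul _
  exact this.congr (Filter.Eventually.of_forall fun u => (quad_expand M u).symm)

lemma IQuad (M : Matrix (Fin n) (Fin n) ℝ) :
    ∫ u : Fin n → ℝ, (u ⬝ᵥ M *ᵥ u) * Gfun u = M.trace * Real.sqrt (2 * Real.pi) ^ n := by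
  have h1 : ∫ u : Fin n → ℝ, (u ⬝ᵥ M *ᵥ u) * Gfun u
      = ∑ j, ∑ k, M j k * ∫ u : Fin n → ℝ, u j * (u k * Gfun u) := by
    rw [show (fun u : Fin n → ℝ => (u ⬝ᵥ M *ᵥ u) * Gfun u)
        = fun u => ∑ j, ∑ k, M j k * (u j * (u k * Gfun u)) from funext (quad_expand M)]
    refine (MeasureTheory.integral_finset_sum _ fun j _ =>
      integrable_finset_sum _ fun k _ => (int_jk j k).const_mul _).trans ?_
    refine Finset.sum_congr rfl fun j _ => ?_
    rw [MeasureTheory.integral_finset_sum _ fun k _ => (int_jk j k).const_mul _]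
    exact Finset.sum_congr rfl fun k _ => MeasureTheory.integral_const_mul _ _
  rw [h1]
  have h2 : ∀ j : Fin n, ∑ k, M j k * ∫ u : Fin n → ℝ, u j * (u k * Gfun u)
      = M j j * Real.sqrt (2 * Real.pi) ^ n := by
    intro j
    rw [Finset.sum_congr rfl fun k _ => by rw [I_jk]]
    simp only [mul_ite, mul_zero]
    rw [Finset.sum_ite_eq Finset.univ j (fun k => M j k * Real.sqrt (2 * Real.pi) ^ n)]
    simp
  rw [Finset.sum_congr rfl fun j _ => h2 j, Matrix.trace, ← Finset.sum_mul]
  rfl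

lemma lin_expand (w : Fin n → ℝ) (u : Fin n → ℝ) :
    (w ⬝ᵥ u) * Gfun u = ∑ j, w j * (u j * Gfun u) := by
  simp only [dotProduct, Finset.sum_mul]
  exact Finset.sum_congr rfl fun j _ => by ring

lemma intLin (w : Fin n → ℝ) :
    Integrable (fun u : Fin n → ℝ => (w ⬝ᵥ u) * Gfun u) := by
  have : Integrable (fun u : Fin n → ℝ => ∑ j, w j * (u j * Gfun u)) :=
    integrable_finset_sum _ fun j _ => (int_j j).const_mul _
  exact this.congr (Filter.Eventually.of_forall fun u => (lin_expand w u).symm)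

lemma ILin (w : Fin n → ℝ) : ∫ u : Fin n → ℝ, (w ⬝ᵥ u) * Gfun u = 0 := by
  rw [show (fun u : Fin n → ℝ => (w ⬝ᵥ u) * Gfun u)
      = fun u => ∑ j, w j * (u j * Gfun u) from funext (lin_expand w)]
  rw [MeasureTheory.integral_finset_sum _ fun j _ => (int_j j).const_mul _]
  refine Finset.sum_eq_zero fun j _ => ?_
  rw [MeasureTheory.integral_const_mul, I_j, mul_zero]

lemma master (M : Matrix (Fin n) (Fin n) ℝ) (w : Fin n → ℝ) (a : ℝ) :
    ∫ u : Fin n → ℝ,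
        (a - (1/2) * (u ⬝ᵥ M *ᵥ u) - w ⬝ᵥ u + (1/2) * (u ⬝ᵥ u))
          * Real.exp (-(1/2) * (u ⬝ᵥ u))
      = (a - (1/2) * M.trace + (n : ℝ)/2) * Real.sqrt (2 * Real.pi) ^ n := by
  have hrw : (fun u : Fin n → ℝ =>
      (a - (1/2) * (u ⬝ᵥ M *ᵥ u) - w ⬝ᵥ u + (1/2) * (u ⬝ᵥ u)) * Real.exp (-(1/2) * (u ⬝ᵥ u)))
      = fun u => a * Gfun u - (1/2) * ((u ⬝ᵥ M *ᵥ u) * Gfun u) - (w ⬝ᵥ u) * Gfun u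
          + (1/2) * ((u ⬝ᵥ (1 : Matrix (Fin n) (Fin n) ℝ) *ᵥ u) * Gfun u) := by
    funext u
    rw [← Gfun_eq, Matrix.one_mulVec]
    ring
  rw [hrw]
  have iA : Integrable (fun u : Fin n → ℝ => a * Gfun u) := intG.const_mul a
  have iB : Integrable (fun u : Fin n → ℝ => (1/2) * ((u ⬝ᵥ M *ᵥ u) * Gfun u)) :=
    (intQuad M).const_mul _
  have iC : Integrable (fun u : Fin n → ℝ => (w ⬝ᵥ u) * Gfun u) := intLin w
  have iD : Integrable (fun u : Fin n → ℝ =>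
      (1/2) * ((u ⬝ᵥ (1 : Matrix (Fin n) (Fin n) ℝ) *ᵥ u) * Gfun u)) :=
    (intQuad 1).const_mul _
  have iAB : Integrable (fun u : Fin n → ℝ =>
      a * Gfun u - (1/2) * ((u ⬝ᵥ M *ᵥ u) * Gfun u)) := iA.sub iB
  have iABC : Integrable (fun u : Fin n → ℝ =>
      a * Gfun u - (1/2) * ((u ⬝ᵥ M *ᵥ u) * Gfun u) - (w ⬝ᵥ u) * Gfun u) := iAB.sub iC
  rw [MeasureTheory.integral_add iABC iD, MeasureTheory.integral_sub iAB iC,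
    MeasureTheory.integral_sub iA iB,
    MeasureTheory.integral_const_mul, MeasureTheory.integral_const_mul,
    MeasureTheory.integral_const_mul, IG, IQuad, IQuad, ILin, Matrix.trace_one,
    Fintype.card_fin]
  ring

end Master

section Subst
variable {n : ℕ}

lemma integral_comp_mulVec (L : Matrix (Fin n) (Fin n) ℝ) (hL : L.det ≠ 0)
    (f : (Fin n → ℝ) → ℝ) :
    ∫ u : Fin n → ℝ, f (L *ᵥ u) = |L.det|⁻¹ * ∫ x : Fin n → ℝ, f x := by
  have hdet : LinearMap.det (Matrix.toLin' L) ≠ 0 := by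
    rwa [LinearMap.det_toLin']
  let e : (Fin n → ℝ) ≃ₗ[ℝ] (Fin n → ℝ) := LinearMap.equivOfDetNeZero _ hdet
  let E : (Fin n → ℝ) ≃ᵐ (Fin n → ℝ) :=
    e.toContinuousLinearEquiv.toHomeomorph.toMeasurableEquiv
  have hE : ∀ u, E u = L *ᵥ u := fun u => Matrix.toLin'_apply L u
  have hmap : (volume : Measure (Fin n → ℝ)).map E
      = ENNReal.ofReal |(L.det)⁻¹| • volume := by
    have : (⇑E : (Fin n → ℝ) → (Fin n → ℝ)) = ⇑(Matrix.toLin' L) := by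
      funext u; exact hE u
    rw [this]
    have := MeasureTheory.Measure.map_linearMap_addHaar_eq_smul_addHaar
      (volume : Measure (Fin n → ℝ)) hdet
    rwa [LinearMap.det_toLin'] at this
  calc ∫ u : Fin n → ℝ, f (L *ᵥ u) = ∫ u : Fin n → ℝ, f (E u) := by
        simp_rw [hE]
    _ = ∫ x, f x ∂((volume : Measure (Fin n → ℝ)).map E) :=
        (MeasureTheory.integral_map_equiv E f).symm
    _ = |L.det|⁻¹ * ∫ x : Fin n → ℝ, f x := by
        rw [hmap, MeasureTheory.integral_smul_measure, ENNReal.toReal_ofReal (abs_nonneg _),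
          abs_inv]
        rfl

lemma integral_comp_mulVec_add (L : Matrix (Fin n) (Fin n) ℝ) (hL : L.det ≠ 0)
    (c : Fin n → ℝ) (f : (Fin n → ℝ) → ℝ) :
    ∫ x : Fin n → ℝ, f x = |L.det| * ∫ u : Fin n → ℝ, f (L *ᵥ u + c) := by
  have h1 : ∫ u : Fin n → ℝ, f (L *ᵥ u + c) = |L.det|⁻¹ * ∫ x : Fin n → ℝ, f (x + c) :=
    integral_comp_mulVec L hL (fun y => f (y + c))
  rw [h1, MeasureTheory.integral_add_right_eq_self (fun y => f y) c, ← mul_assoc,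
    mul_inv_cancel₀ (abs_ne_zero.mpr hL), one_mul]

end Subst

section MatrixAux
variable {n : ℕ}

lemma dot_aux (A B : Matrix (Fin n) (Fin n) ℝ) (u z : Fin n → ℝ) :
    (A *ᵥ u) ⬝ᵥ (B *ᵥ z) = u ⬝ᵥ ((Aᵀ * B) *ᵥ z) := by
  rw [dotProduct_mulVec, Matrix.vecMul_mulVec, ← dotProduct_mulVec]

lemma herm_transpose {A : Matrix (Fin n) (Fin n) ℝ} (h : A.IsHermitian) : Aᵀ = A := h

lemma det_two_pi_smul_pos {S : Matrix (Fin n) (Fin n) ℝ} (hS : S.PosDef) :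
    0 < ((2 * Real.pi) • S).det := by
  rw [Matrix.det_smul, Fintype.card_fin]
  exact mul_pos (pow_pos (by positivity) n) hS.det_pos

lemma gaussianDensity_pos {m : Fin n → ℝ} {S : Matrix (Fin n) (Fin n) ℝ}
    (hS : S.PosDef) (x : Fin n → ℝ) : 0 < gaussianDensity m S x :=
  mul_pos (Real.rpow_pos_of_pos (det_two_pi_smul_pos hS) _) (Real.exp_pos _)

end MatrixAux

end Aux

/-- **Negative relative entropy of Gaussian conditionals as a Gaussian likelihood.**
For Gaussian conditionals `κᵢ(x' | x) = N(x'; Aᵢ x + bᵢ, Σᵢ)` with `Σ₁, Σ₂` positive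
definite, for every `x ∈ ℝ^d`
`∫ log (κ₂(x'|x)/κ₁(x'|x)) · κ₁(x'|x) dx' = log c + log N(b₂ − b₁; (A₁ − A₂) x, Σ₂)`
where `log c = −(1/2)·[tr(Σ₂⁻¹ Σ₁) − n·(1 + log 2π) − log det Σ₁]`;
the integral is over Lebesgue measure on `ℝ^n`. -/
theorem gaussian_conditional_relative_entropy_likelihood
    (d n : ℕ)
    (A₁ A₂ : Matrix (Fin n) (Fin d) ℝ) (b₁ b₂ : Fin n → ℝ)
    (S₁ S₂ : Matrix (Fin n) (Fin n) ℝ) (hS₁ : S₁.PosDef) (hS₂ : S₂.PosDef) :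
    ∀ x : Fin d → ℝ,
      (∫ x' : Fin n → ℝ,
          Real.log (gaussianDensity (A₂.mulVec x + b₂) S₂ x' /
              gaussianDensity (A₁.mulVec x + b₁) S₁ x') *
            gaussianDensity (A₁.mulVec x + b₁) S₁ x')
        = (-(1 / 2) *
            ((S₂⁻¹ * S₁).trace - (n : ℝ) * (1 + Real.log (2 * Real.pi))
              - Real.log S₁.det))
          + Real.log (gaussianDensity ((A₁ - A₂).mulVec x) S₂ (b₂ - b₁)) := by
  intro x
  set m₁ : Fin n → ℝ := A₁ *ᵥ x + b₁ with hm₁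
  set m₂ : Fin n → ℝ := A₂ *ᵥ x + b₂ with hm₂
  set vv : Fin n → ℝ := m₁ - m₂ with hvv
  -- constants
  set K₁ : ℝ := ((2 * Real.pi) • S₁).det ^ (-(1 : ℝ) / 2) with hK₁
  set K₂ : ℝ := ((2 * Real.pi) • S₂).det ^ (-(1 : ℝ) / 2) with hK₂
  have hK₁pos : 0 < K₁ := Real.rpow_pos_of_pos (det_two_pi_smul_pos hS₁) _
  have hK₂pos : 0 < K₂ := Real.rpow_pos_of_pos (det_two_pi_smul_pos hS₂) _
  -- the square root of S₁
  have Lp : S₁.PosSemidef := hS₁.posSemidef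
  obtain ⟨L, hLh, hLL⟩ : ∃ L : Matrix (Fin n) (Fin n) ℝ, L.IsHermitian ∧ L * L = S₁ := by
    open MatrixOrder in
    exact ⟨CFC.sqrt S₁, (CFC.sqrt_nonneg S₁).posSemidef.1, CFC.sqrt_mul_sqrt_self S₁ Lp.nonneg⟩
  have hLsym : Lᵀ = L := herm_transpose hLh
  have hdetL2 : L.det * L.det = S₁.det := by rw [← Matrix.det_mul, hLL]
  have hdetL : L.det ≠ 0 := by
    intro h
    rw [h, mul_zero] at hdetL2
    exact hS₁.det_pos.ne hdetL2
  have habs : |L.det| = Real.sqrt S₁.det := by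
    rw [← hdetL2, ← sq, Real.sqrt_sq_eq_abs]
  have hUnit : IsUnit L.det := isUnit_iff_ne_zero.mpr hdetL
  have hS₂invsym : (S₂⁻¹)ᵀ = S₂⁻¹ := herm_transpose hS₂.1.inv
  -- quadratic identities
  have hinv1 : L * S₁⁻¹ * L = 1 := by
    rw [← hLL, Matrix.mul_inv_rev, ← mul_assoc, Matrix.mul_nonsing_inv _ hUnit,
      one_mul, Matrix.nonsing_inv_mul _ hUnit]
  set M : Matrix (Fin n) (Fin n) ℝ := L * S₂⁻¹ * L with hM
  set w : Fin n → ℝ := (L * S₂⁻¹) *ᵥ vv with hw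
  set c₀ : ℝ := vv ⬝ᵥ S₂⁻¹ *ᵥ vv with hc₀
  have Id2 : ∀ u : Fin n → ℝ, (L *ᵥ u) ⬝ᵥ S₁⁻¹ *ᵥ (L *ᵥ u) = u ⬝ᵥ u := by
    intro u
    rw [Matrix.mulVec_mulVec, dot_aux, hLsym, ← mul_assoc, hinv1, Matrix.one_mulVec]
  have Id1 : ∀ u : Fin n → ℝ,
      (L *ᵥ u + vv) ⬝ᵥ S₂⁻¹ *ᵥ (L *ᵥ u + vv)
        = u ⬝ᵥ M *ᵥ u + 2 * (w ⬝ᵥ u) + c₀ := by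
    intro u
    rw [Matrix.mulVec_add, add_dotProduct, dotProduct_add, dotProduct_add]
    have t11 : (L *ᵥ u) ⬝ᵥ S₂⁻¹ *ᵥ (L *ᵥ u) = u ⬝ᵥ M *ᵥ u := by
      rw [Matrix.mulVec_mulVec, dot_aux, hLsym, hM, mul_assoc]
    have t12 : (L *ᵥ u) ⬝ᵥ S₂⁻¹ *ᵥ vv = w ⬝ᵥ u := by
      rw [dot_aux, hLsym, ← hw, dotProduct_comm]
    have t21 : vv ⬝ᵥ S₂⁻¹ *ᵥ (L *ᵥ u) = w ⬝ᵥ u := by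
      rw [Matrix.mulVec_mulVec, dotProduct_mulVec]
      have : vv ᵥ* (S₂⁻¹ * L) = (L * S₂⁻¹) *ᵥ vv := by
        rw [show S₂⁻¹ * L = ((S₂⁻¹ * L)ᵀ)ᵀ by rw [Matrix.transpose_transpose],
          Matrix.vecMul_transpose, Matrix.transpose_mul, hLsym, hS₂invsym]
      rw [this, hw]
    rw [t11, t12, t21, ← hc₀]
    ring
  have htr : M.trace = (S₂⁻¹ * S₁).trace := by
    rw [hM, Matrix.trace_mul_comm, ← mul_assoc, hLL, Matrix.trace_mul_comm]
  set a : ℝ := Real.log K₂ - Real.log K₁ - (1/2) * c₀ with ha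
  have step1 : (∫ x' : Fin n → ℝ,
        Real.log (gaussianDensity m₂ S₂ x' / gaussianDensity m₁ S₁ x')
          * gaussianDensity m₁ S₁ x')
      = |L.det| * ∫ u : Fin n → ℝ,
          K₁ * ((a - (1/2) * (u ⬝ᵥ M *ᵥ u) - w ⬝ᵥ u + (1/2) * (u ⬝ᵥ u))
            * Real.exp (-(1/2) * (u ⬝ᵥ u))) := by
    rw [integral_comp_mulVec_add L hdetL m₁ (fun x' =>
      Real.log (gaussianDensity m₂ S₂ x' / gaussianDensity m₁ S₁ x')
        * gaussianDensity m₁ S₁ x')]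
    congr 1
    apply MeasureTheory.integral_congr_ae
    filter_upwards with u
    show Real.log (gaussianDensity m₂ S₂ (L *ᵥ u + m₁) / gaussianDensity m₁ S₁ (L *ᵥ u + m₁))
        * gaussianDensity m₁ S₁ (L *ᵥ u + m₁) = _
    have e1 : L *ᵥ u + m₁ - m₁ = L *ᵥ u := add_sub_cancel_right _ _
    have e2 : L *ᵥ u + m₁ - m₂ = L *ᵥ u + vv := by rw [hvv, add_sub_assoc]
    rw [Real.log_div (gaussianDensity_pos hS₂ _).ne' (gaussianDensity_pos hS₁ _).ne']
    simp only [gaussianDensity]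
    rw [← hK₁, ← hK₂]
    rw [e1, e2, Id2, Id1,
      Real.log_mul hK₂pos.ne' (Real.exp_pos _).ne',
      Real.log_mul hK₁pos.ne' (Real.exp_pos _).ne', Real.log_exp, Real.log_exp, ha]
    ring
  rw [step1, MeasureTheory.integral_const_mul, master, htr]
  -- right-hand side gaussian density
  have hRHS : Real.log (gaussianDensity ((A₁ - A₂) *ᵥ x) S₂ (b₂ - b₁))
      = Real.log K₂ + (-(1/2) * c₀) := by
    have hveq : b₂ - b₁ - (A₁ - A₂) *ᵥ x = -vv := by
      rw [Matrix.sub_mulVec, hvv, hm₁, hm₂]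
      abel
    simp only [gaussianDensity]
    rw [← hK₂, hveq, Matrix.mulVec_neg, neg_dotProduct, dotProduct_neg, neg_neg,
      ← hc₀, Real.log_mul hK₂pos.ne' (Real.exp_pos _).ne', Real.log_exp]
  rw [hRHS]
  -- scalar bookkeeping
  have hdet1 : (0:ℝ) < S₁.det := hS₁.det_pos
  have h2pi : (0:ℝ) < 2 * Real.pi := by positivity
  have hKdet : K₁ = ((2 * Real.pi) ^ n * S₁.det) ^ (-(1:ℝ)/2) := by
    rw [hK₁, Matrix.det_smul, Fintype.card_fin]
  have hprod : |L.det| * K₁ * Real.sqrt (2 * Real.pi) ^ n = 1 := by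
    have hd : S₁.det ^ ((1:ℝ)/2) * S₁.det ^ (-(1:ℝ)/2) = 1 := by
      rw [← Real.rpow_add hdet1, show (1:ℝ)/2 + -(1:ℝ)/2 = 0 by ring, Real.rpow_zero]
    have hp : ((2*Real.pi) ^ ((n:ℝ) * (-(1:ℝ)/2))) * ((2*Real.pi) ^ ((1:ℝ)/2)) ^ n = 1 := by
      rw [← Real.rpow_natCast ((2*Real.pi) ^ ((1:ℝ)/2)) n, ← Real.rpow_mul h2pi.le,
        ← Real.rpow_add h2pi, show (n:ℝ) * (-(1:ℝ)/2) + (1:ℝ)/2 * (n:ℝ) = 0 by ring,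
        Real.rpow_zero]
    rw [habs, hKdet, Real.sqrt_eq_rpow, Real.sqrt_eq_rpow,
      Real.mul_rpow (by positivity) hdet1.le,
      ← Real.rpow_natCast (2 * Real.pi) n,
      ← Real.rpow_mul h2pi.le]
    calc S₁.det ^ ((1:ℝ)/2)
          * ((2*Real.pi) ^ ((n:ℝ) * (-(1:ℝ)/2)) * S₁.det ^ (-(1:ℝ)/2))
          * ((2*Real.pi) ^ ((1:ℝ)/2)) ^ n
        = (S₁.det ^ ((1:ℝ)/2) * S₁.det ^ (-(1:ℝ)/2))
            * (((2*Real.pi) ^ ((n:ℝ) * (-(1:ℝ)/2))) * ((2*Real.pi) ^ ((1:ℝ)/2)) ^ n) := by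
          ring
      _ = 1 := by rw [hd, hp, one_mul]
  have hlogK₁ : Real.log K₁ = -(1/2) * ((n:ℝ) * Real.log (2 * Real.pi) + Real.log S₁.det) := by
    rw [hKdet, Real.log_rpow (by positivity),
      Real.log_mul (by positivity) hdet1.ne', Real.log_pow]
    push_cast
    ring
  -- final algebra
  have key : |L.det| * (K₁ * ((a - 1/2 * (S₂⁻¹ * S₁).trace + (n:ℝ)/2)
      * Real.sqrt (2 * Real.pi) ^ n))
      = a - 1/2 * (S₂⁻¹ * S₁).trace + (n:ℝ)/2 := by
    calc |L.det| * (K₁ * ((a - 1/2 * (S₂⁻¹ * S₁).trace + (n:ℝ)/2)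
          * Real.sqrt (2 * Real.pi) ^ n))
        = (|L.det| * K₁ * Real.sqrt (2 * Real.pi) ^ n)
            * (a - 1/2 * (S₂⁻¹ * S₁).trace + (n:ℝ)/2) := by ring
      _ = _ := by rw [hprod, one_mul]
  rw [key, ha, hlogK₁]
  ring
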